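/- Let $a > 15788$ be a real number and define $f : [2, \infty) \to \mathbb{R}$ by $f(x) = (2904 x)^x \, a^{x/(x-1)}$. Then $f$ attains its minimum at a unique point $\xi \in (2, \infty)$, and $\xi$ satisfies $\sqrt{\frac{2 \log a}{\log(\log a / \log\log a) + 21}} + 1 < \xi < \sqrt{\frac{2 \log a}{\log(\log a / \log\log a) + 16}} + 1$. -/

import Mathlib

open Real Set

-- Numeric helper lemmas
lemma aux_exp8 : Real.exp 8 < 5808 := by
  have h : Real.exp 8 = Real.exp 1 ^ 8 := by rw [← Real.exp_nat_mul]; norm_num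
  rw [h]
  calc Real.exp 1 ^ 8 ≤ 2.7182818286^8 :=
      pow_le_pow_left₀ (Real.exp_pos 1).le Real.exp_one_lt_d9.le _
    _ < 5808 := by norm_num

lemma aux_exp14 : Real.exp 14 < 1202605 := by
  have h : Real.exp 14 = Real.exp 1 ^ 14 := by rw [← Real.exp_nat_mul]; norm_num
  rw [h]
  calc Real.exp 1 ^ 14 ≤ 2.7182818286^14 :=
      pow_le_pow_left₀ (Real.exp_pos 1).le Real.exp_one_lt_d9.le _
    _ < 1202605 := by norm_num

lemma aux_exp2 : Real.exp 2 < 9 := by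
  have h : Real.exp 2 = Real.exp 1 ^ 2 := by rw [← Real.exp_nat_mul]; norm_num
  rw [h]; nlinarith [Real.exp_one_lt_d9, (Real.exp_pos 1).le]

lemma aux_5808e : (5808:ℝ) * Real.exp 1 < 15788 := by
  nlinarith [Real.exp_one_lt_d9, (Real.exp_pos 1).le]

lemma aux_log5808_ub : 2 * Real.log 5808 ≤ 17.334 := by
  have h2 : Real.log ((5808:ℝ)^2) = 25 * Real.log 2 + Real.log ((33732864:ℝ)/33554432) := by
    rw [show ((5808:ℝ))^2 = 2^25 * (33732864/33554432) by norm_num,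
      Real.log_mul (by norm_num) (by norm_num), Real.log_pow]
    push_cast; ring
  have h3 : Real.log ((33732864:ℝ)/33554432) ≤ 0.0053182 :=
    le_trans (Real.log_le_sub_one_of_pos (by norm_num)) (by norm_num)
  have h4 : Real.log ((5808:ℝ)^2) = 2 * Real.log 5808 := by
    rw [Real.log_pow]; push_cast; ring
  have h5 := h4.symm.trans h2
  have h6 := Real.log_two_lt_d9
  rw [h5]; linarith

lemma aux_log5808_lb : (8:ℝ) < Real.log 5808 :=
  (Real.lt_log_iff_exp_lt (by norm_num)).2 aux_exp8

lemma aux_log3 : Real.log 3 ≤ 2 * Real.log 2 := by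
  have h : Real.log ((4:ℝ)) = 2 * Real.log 2 := by
    rw [show (4:ℝ) = 2^2 by norm_num, Real.log_pow]; push_cast; ring
  rw [← h]; exact Real.log_le_log (by norm_num) (by norm_num)

lemma aux_log5808_split : Real.log 5808 = Real.log 2904 + Real.log 2 := by
  rw [show (5808:ℝ) = 2904 * 2 by norm_num, Real.log_mul (by norm_num) (by norm_num)]

theorem stmt_16 (a : ℝ) (ha : 15788 < a) :
    ∃ ξ : ℝ, 2 < ξ ∧
      (∀ x : ℝ, 2 ≤ x →
        Real.rpow (2904 * ξ) ξ * Real.rpow a (ξ / (ξ - 1)) ≤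
          Real.rpow (2904 * x) x * Real.rpow a (x / (x - 1))) ∧
      (∀ ξ' : ℝ, 2 ≤ ξ' →
        (∀ x : ℝ, 2 ≤ x →
          Real.rpow (2904 * ξ') ξ' * Real.rpow a (ξ' / (ξ' - 1)) ≤
            Real.rpow (2904 * x) x * Real.rpow a (x / (x - 1))) → ξ' = ξ) ∧
      Real.sqrt (2 * Real.log a /
          (Real.log (Real.log a / Real.log (Real.log a)) + 21)) + 1 < ξ ∧
      ξ < Real.sqrt (2 * Real.log a /
          (Real.log (Real.log a / Real.log (Real.log a)) + 16)) + 1 := by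
  have ha0 : (0:ℝ) < a := by linarith
  set L := Real.log a with hLdef
  -- basic bounds on L
  have hL9 : Real.log 5808 + 1 < L := by
    have h1 : (5808:ℝ) * Real.exp 1 < a := lt_trans aux_5808e ha
    have h2 := Real.log_lt_log (by positivity) h1
    rwa [Real.log_mul (by norm_num) (Real.exp_ne_zero 1), Real.log_exp] at h2
  have hLpos : 9 < L := by linarith [aux_log5808_lb]
  -- the function φ
  set φ : ℝ → ℝ := fun x => (Real.log (2904*x) + 1) * (x-1)^2 with hφdef
  have hφmono : ∀ ⦃x y : ℝ⦄, 2 ≤ x → x < y → φ x < φ y := by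
    intro x y hx hxy
    have h1 : 0 ≤ Real.log (2904*x) + 1 := by
      have h : (1:ℝ) ≤ 2904*x := by nlinarith
      nlinarith [Real.log_nonneg h]
    have h2 : Real.log (2904*x) < Real.log (2904*y) :=
      Real.log_lt_log (by nlinarith) (by nlinarith)
    have h3 : (x-1)^2 < (y-1)^2 := by nlinarith
    exact mul_lt_mul'' (by linarith) h3 h1 (by nlinarith)
  have hφ2 : φ 2 = Real.log 5808 + 1 := by
    simp only [hφdef]
    norm_num [show (2904:ℝ)*2 = 5808 by norm_num]
  -- find the root ξ of φ = L by IVT on [2, M]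
  set M := 1 + Real.sqrt L with hMdef
  have hsL : 3 < Real.sqrt L := by
    rw [show (3:ℝ) = Real.sqrt 9 by rw [show (9:ℝ) = 3^2 by norm_num, Real.sqrt_sq]; norm_num]
    exact Real.sqrt_lt_sqrt (by norm_num) hLpos
  have hM4 : 4 < M := by simp only [hMdef]; linarith
  have hφcont : ContinuousOn φ (Set.Icc 2 M) := by
    apply ContinuousOn.mul
    · apply ContinuousOn.add _ continuousOn_const
      apply ContinuousOn.log (by fun_prop)
      intro x hx
      have := hx.1
      nlinarith
    · fun_prop
  have hφM : L < φ M := by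
    have hMsq : (M - 1)^2 = L := by
      simp only [hMdef]
      rw [add_sub_cancel_left, Real.sq_sqrt (by linarith)]
    have h1 : (1:ℝ) ≤ Real.log (2904*M) := by
      rw [show (1:ℝ) = Real.log (Real.exp 1) by rw [Real.log_exp]]
      apply Real.log_le_log (Real.exp_pos 1)
      nlinarith [Real.exp_one_lt_d9]
    simp only [hφdef]
    rw [hMsq]
    nlinarith
  obtain ⟨ξ, hξmem, hξeq⟩ := intermediate_value_Icc (by linarith : (2:ℝ) ≤ M) hφcont
    ⟨by rw [hφ2]; linarith, hφM.le⟩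
  have hξ2 : 2 < ξ := by
    rcases lt_or_eq_of_le hξmem.1 with h | h
    · exact h
    · exfalso; rw [← h] at hξeq; rw [hφ2] at hξeq; linarith
  have hξ2le : (2:ℝ) ≤ ξ := hξ2.le
  -- sign of φ relative to L
  have hlt : ∀ x, 2 ≤ x → x < ξ → φ x < L := fun x hx hxξ => hξeq ▸ hφmono hx hxξ
  have hgt : ∀ x, ξ < x → L < φ x := fun x h => hξeq ▸ hφmono hξ2le h
  -- the log of f
  set g : ℝ → ℝ := fun x => x * Real.log (2904*x) + x/(x-1) * L with hgdef
  have hderiv : ∀ x : ℝ, 1 < x →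
      HasDerivAt g (Real.log (2904*x) + 1 - L/(x-1)^2) x := by
    intro x hx
    have hx0 : x ≠ 0 := by linarith
    have hx1 : x - 1 ≠ 0 := by intro h; nlinarith [sub_eq_zero.1 h]
    have h1 : HasDerivAt (fun y : ℝ => 2904*y) 2904 x := by
      simpa using (hasDerivAt_id x).const_mul (2904:ℝ)
    have h2 : HasDerivAt (fun y : ℝ => Real.log (2904*y)) (2904/(2904*x)) x :=
      h1.log (by positivity)
    have h3 : HasDerivAt (fun y : ℝ => y * Real.log (2904*y))
        (1 * Real.log (2904*x) + x * (2904/(2904*x))) x := (hasDerivAt_id x).mul h2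
    have h4 : HasDerivAt (fun y : ℝ => y/(y-1)) ((1*(x-1) - x*1)/(x-1)^2) x :=
      (hasDerivAt_id x).div ((hasDerivAt_id x).sub_const 1) hx1
    have h5 := h3.add (h4.mul_const L)
    refine h5.congr_deriv ?_
    field_simp
    ring
  have hgcont : ∀ x : ℝ, 1 < x → ContinuousAt g x := fun x hx =>
    (hderiv x hx).differentiableAt.continuousAt
  -- g is strictly decreasing on [2, ξ] and strictly increasing on [ξ, ∞)
  have hanti : StrictAntiOn g (Set.Icc 2 ξ) := by
    apply strictAntiOn_of_deriv_neg (convex_Icc 2 ξ)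
    · exact fun x hx => ((hgcont x (by linarith [hx.1])).continuousWithinAt)
    · intro x hx
      rw [interior_Icc] at hx
      have hx1 : (1:ℝ) < x := by linarith [hx.1]
      rw [(hderiv x hx1).deriv]
      have h1 : φ x < L := hlt x (by linarith [hx.1]) hx.2
      have h2 : Real.log (2904*x) + 1 < L/(x-1)^2 := by
        rw [lt_div_iff₀ (by nlinarith)]
        exact h1
      linarith
  have hmono2 : StrictMonoOn g (Set.Ici ξ) := by
    apply strictMonoOn_of_deriv_pos (convex_Ici ξ)
    · exact fun x hx => ((hgcont x (by linarith [mem_Ici.1 hx])).continuousWithinAt)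
    · intro x hx
      rw [interior_Ici] at hx
      have hx1 : (1:ℝ) < x := by linarith [mem_Ioi.1 hx]
      rw [(hderiv x hx1).deriv]
      have h1 : L < φ x := hgt x hx
      have h2 : L/(x-1)^2 < Real.log (2904*x) + 1 := by
        rw [div_lt_iff₀ (by nlinarith [mem_Ioi.1 hx])]
        exact h1
      linarith
  have hgmin : ∀ x, 2 ≤ x → x ≠ ξ → g ξ < g x := by
    intro x hx hne
    rcases lt_or_gt_of_ne hne with h | h
    · exact hanti (Set.mem_Icc.2 ⟨hx, h.le⟩) (Set.mem_Icc.2 ⟨hξ2le, le_refl ξ⟩) h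
    · exact hmono2 (Set.mem_Ici.2 (le_refl ξ)) (Set.mem_Ici.2 h.le) h
  -- relate f to exp ∘ g
  have hf : ∀ x : ℝ, 2 ≤ x →
      Real.rpow (2904*x) x * Real.rpow a (x/(x-1)) = Real.exp (g x) := by
    intro x hx
    show (2904*x) ^ x * a ^ (x/(x-1)) = Real.exp (g x)
    rw [Real.rpow_def_of_pos (by linarith) x, Real.rpow_def_of_pos ha0, ← Real.exp_add]
    congr 1
    simp only [hgdef]
    ring
  -- the quantities for the bounds
  set s := Real.log (2904*ξ) + 1 with hsdef
  have hseq : s * (ξ-1)^2 = L := hξeq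
  set u := Real.log ξ with hudef
  set v := Real.log (ξ-1) with hvdef
  set m := Real.log 2904 with hmdef
  have hsu : s = m + u + 1 := by
    simp only [hsdef, hudef, hmdef, Real.log_mul (by norm_num : (2904:ℝ) ≠ 0) (by linarith : ξ ≠ 0)]
  have hm8 : (7:ℝ) < m := by
    have := aux_log5808_split
    have := aux_log5808_lb
    have h2 := Real.log_two_lt_d9
    simp only [hmdef]; linarith
  have hulog2 : Real.log 2 < u := Real.log_lt_log (by norm_num) hξ2
  have hlog2pos : (0:ℝ) < Real.log 2 := Real.log_pos (by norm_num)
  have hs9 : 9 < s := by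
    have := aux_log5808_split
    have := aux_log5808_lb
    rw [hsu]; linarith
  have hvpos : 0 < v := Real.log_pos (by linarith)
  have hvu : v < u := Real.log_lt_log (by linarith) (by linarith)
  have hu_le : u ≤ v + Real.log 2 := by
    have h1 : ξ ≤ 2 * (ξ - 1) := by linarith
    have h2 := Real.log_le_log (by linarith : (0:ℝ) < ξ) h1
    rw [Real.log_mul (by norm_num) (by linarith : ξ - 1 ≠ 0)] at h2
    simp only [hudef, hvdef]; linarith
  have hlogL_eq : Real.log L = 2*v + Real.log s := by
    rw [← hseq, Real.log_mul (by linarith : s ≠ 0) (pow_ne_zero 2 (ne_of_gt (by linarith : (0:ℝ) < ξ - 1))), Real.log_pow]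
    simp only [hvdef]; push_cast; ring
  have hlogs2 : 2 < Real.log s :=
    (Real.lt_log_iff_exp_lt (by linarith)).2 (lt_trans aux_exp2 (by linarith))
  have hlogLpos : (0:ℝ) < Real.log L := by rw [hlogL_eq]; linarith
  have hL0 : (0:ℝ) < L := by linarith
  -- key multiplicative inequality: exp 14 * s ≤ 2904² * log L
  have hkey : Real.exp 14 * s ≤ 8433216 * Real.log L := by
    have he14 := aux_exp14
    have hepos := (Real.exp_pos 14).le
    have p1 : Real.exp 14 * s ≤ 1202605 * s :=
      mul_le_mul_of_nonneg_right he14.le (by linarith)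
    rcases le_or_gt s (21/2) with hs | hs
    · have h1 : Real.log s ≤ Real.log L := by rw [hlogL_eq]; linarith
      have p2 : (8433216:ℝ) * 2 ≤ 8433216 * Real.log L :=
        mul_le_mul_of_nonneg_left (by linarith) (by norm_num)
      have p3 : (1202605:ℝ) * s ≤ 1202605 * (21/2) :=
        mul_le_mul_of_nonneg_left hs (by norm_num)
      linarith
    · have hlogs0 : (0:ℝ) ≤ Real.log s := by linarith
      have h1 : 2*s - 19.334 ≤ Real.log L := by
        have hlog5808 := aux_log5808_ub
        have hsplit := aux_log5808_split
        rw [hlogL_eq]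
        -- v ≥ u - log 2 = (s - m - 1) - log 2
        have h2 : u - Real.log 2 ≤ v := by linarith
        have h3 : u = s - m - 1 := by linarith [hsu]
        linarith
      have p2 : (8433216:ℝ) * (2*s - 19.334) ≤ 8433216 * Real.log L :=
        mul_le_mul_of_nonneg_left h1 (by norm_num)
      linarith
  have hupper : Real.log s + 14 ≤ 2*m + Real.log (Real.log L) := by
    have hkey' : Real.exp 14 * s ≤ 2904^2 * Real.log L := by
      rw [show ((2904:ℝ))^2 = 8433216 by norm_num]; exact hkey
    have h := Real.log_le_log (by positivity) hkey'
    rw [Real.log_mul (Real.exp_ne_zero 14) (by linarith : s ≠ 0), Real.log_exp,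
      Real.log_mul (by norm_num : ((2904:ℝ)^2) ≠ 0) (ne_of_gt hlogLpos),
      Real.log_pow] at h
    simp only [hmdef]
    push_cast at h
    linarith
  have hlogL_lt3s : Real.log L < 3*s := by
    have h1 : Real.log s ≤ s - 1 := Real.log_le_sub_one_of_pos (by linarith)
    rw [hlogL_eq]
    have : u = s - m - 1 := by linarith [hsu]
    linarith
  have hloglog_lt : Real.log (Real.log L) < Real.log 3 + Real.log s := by
    have h := Real.log_lt_log hlogLpos hlogL_lt3s
    rwa [Real.log_mul (by norm_num) (by linarith : s ≠ 0)] at h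
  -- the two bounds on 2s
  set D := Real.log (L / Real.log L) with hDdef
  have hDeq : D = Real.log L - Real.log (Real.log L) := by
    rw [hDdef, Real.log_div (ne_of_gt hL0) (ne_of_gt hlogLpos)]
  have hDpos : 0 < D := by
    rw [hDdef]
    apply Real.log_pos
    rw [lt_div_iff₀ hlogLpos, one_mul]
    calc Real.log L ≤ L - 1 := Real.log_le_sub_one_of_pos hL0
      _ < L := by linarith
  have hT1 : D + 16 < 2*s := by
    linarith [hDeq, hlogL_eq, hsu, hupper, hvu]
  have hT2 : 2*s < D + 21 := by
    have hlog5808 := aux_log5808_ub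
    have hsplit := aux_log5808_split
    have hlog3 := aux_log3
    have hlog2 := Real.log_two_lt_d9
    linarith [hDeq, hlogL_eq, hsu, hu_le, hloglog_lt]
  -- convert to sqrt bounds
  have hξsq : (ξ-1)^2 = L / s := by
    field_simp
    linarith [hseq]
  have hub : ξ < Real.sqrt (2 * L / (D + 16)) + 1 := by
    have h1 : ξ - 1 < Real.sqrt (2 * L / (D + 16)) := by
      rw [Real.lt_sqrt (by linarith : (0:ℝ) ≤ ξ - 1), hξsq,
        div_lt_div_iff₀ (by linarith : (0:ℝ) < s) (by linarith : (0:ℝ) < D + 16)]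
      calc L * (D + 16) < L * (2*s) := mul_lt_mul_of_pos_left hT1 hL0
        _ = 2 * L * s := by ring
    linarith
  have hlb : Real.sqrt (2 * L / (D + 21)) + 1 < ξ := by
    have h1 : Real.sqrt (2 * L / (D + 21)) < ξ - 1 := by
      rw [Real.sqrt_lt' (by linarith : (0:ℝ) < ξ - 1), hξsq,
        div_lt_div_iff₀ (by linarith : (0:ℝ) < D + 21) (by linarith : (0:ℝ) < s)]
      calc 2 * L * s = L * (2*s) := by ring
        _ < L * (D + 21) := mul_lt_mul_of_pos_left hT2 hL0
    linarith
  -- assemble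
  refine ⟨ξ, hξ2, ?_, ?_, hlb, hub⟩
  · intro x hx
    rw [hf ξ hξ2le, hf x hx, Real.exp_le_exp]
    rcases eq_or_ne x ξ with h | h
    · rw [h]
    · exact (hgmin x hx h).le
  · intro ξ' hξ' hmin'
    by_contra hne
    have h1 := hmin' ξ hξ2le
    rw [hf ξ hξ2le, hf ξ' hξ', Real.exp_le_exp] at h1
    have h2 := hgmin ξ' hξ' hne
    linarith
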